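/- arXiv:1604.05999 — 2 statements merged into one kernel-verified Lean document; each statement's English description precedes it below -/
import Mathlib

section
/- For positive reals x and y, (x+y)·lg(x+y) − x·lg(x) ≤ y·(2 + lg(x+y)), where lg denotes the base-2 logarithm. -/
theorem stmt_0 (x y : ℝ) (hx : 0 < x) (hy : 0 < y) :
    (x + y) * Real.logb 2 (x + y) - x * Real.logb 2 x ≤ y * (2 + Real.logb 2 (x + y)) := by
  have h2 : (0:ℝ) < Real.log 2 := Real.log_pos (by norm_num)
  have hxy : (0:ℝ) < (x + y) / x := by positivity
  have hlog : Real.log ((x + y) / x) ≤ y / x := by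
    have h1 := Real.log_le_sub_one_of_pos hxy
    have h2' : (x + y) / x - 1 = y / x := by field_simp; ring
    linarith
  have hdiff : Real.log (x + y) - Real.log x ≤ y / x := by
    rw [← Real.log_div (by positivity) hx.ne']; exact hlog
  have hmul : x * (Real.log (x + y) - Real.log x) ≤ y := by
    have := mul_le_mul_of_nonneg_left hdiff hx.le
    rwa [mul_div_cancel₀ _ hx.ne'] at this
  have h2' : (1:ℝ)/2 ≤ Real.log 2 := by
    have := Real.log_two_gt_d9; linarith
  rw [Real.logb, Real.logb, div_eq_inv_mul, div_eq_inv_mul]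
  rw [show y * (2 + (Real.log 2)⁻¹ * Real.log (x + y)) =
      2 * y + y * ((Real.log 2)⁻¹ * Real.log (x + y)) by ring]
  have hinv : (Real.log 2)⁻¹ ≤ 2 := by
    rw [inv_le_comm₀ h2 (by norm_num)]; linarith
  have hinvpos : (0:ℝ) < (Real.log 2)⁻¹ := by positivity
  nlinarith [mul_le_mul_of_nonneg_left hmul hinvpos.le,
    mul_le_mul_of_nonneg_left hinv hy.le]
end

section
/- Let a, b be positive integers, and let a₁, …, a_r be integers with 0 ≤ a_i < a for each i and ∑ a_i ≤ b. Then ∏_{i=1}^r (1 − a_i/a) ≥ a^{−2b/a − 1}. -/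
open Finset

lemma key_ineq (a k : ℕ) (ha2 : 2 ≤ a) (hk : k < a) :
    (a:ℝ) ^ (-(2 * (k:ℝ) / a)) ≤ 1 - (k:ℝ) / a := by
  have hA : (2:ℝ) ≤ (a:ℝ) := by exact_mod_cast ha2
  have hA0 : (0:ℝ) < a := by linarith
  have hA1 : (1:ℝ) ≤ a := by linarith
  set A : ℝ := (a:ℝ) with hAdef
  set t1 : ℝ := 1 - 1/A with ht1def
  have hinv : 1/A ≤ 1/2 := by
    apply one_div_le_one_div_of_le <;> linarith
  have hinv0 : 0 < 1/A := by positivity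
  have ht1 : 0 < t1 := by rw [ht1def]; linarith
  have hkA : (k:ℝ) ≤ A - 1 := by
    have h : (k:ℝ) + 1 ≤ (a:ℝ) := by exact_mod_cast hk
    rw [hAdef]; linarith
  have htle : (k:ℝ)/A ≤ t1 := by
    rw [ht1def]
    rw [div_le_iff₀ hA0]
    have : (1 - 1/A) * A = A - 1 := by field_simp
    rw [this]; exact hkA
  have ht0 : 0 ≤ (k:ℝ)/A := by positivity
  set s : ℝ := ((k:ℝ)/A)/t1 with hsdef
  have hs0 : 0 ≤ s := by positivity
  have hs1 : s ≤ 1 := by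
    rw [hsdef, div_le_one ht1]; exact htle
  have hst : s * t1 = (k:ℝ)/A := by
    rw [hsdef]; field_simp
  have hexp : -(2 * (k:ℝ) / a) = (-(2 * t1)) * s := by
    have : 2 * (k:ℝ)/A = 2 * (s * t1) := by rw [hst]; ring
    rw [← hAdef]
    rw [this]
    ring
  rw [hexp, Real.rpow_mul hA0.le]
  have hP0 : 0 ≤ A ^ (-(2 * t1)) := (Real.rpow_pos_of_pos hA0 _).le
  have hgm : (A ^ (-(2 * t1))) ^ s * (1:ℝ) ^ (1 - s) ≤ s * A ^ (-(2 * t1)) + (1 - s) * 1 :=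
    Real.geom_mean_le_arith_mean2_weighted hs0 (by linarith) hP0 zero_le_one (by ring)
  rw [Real.one_rpow, mul_one, mul_one] at hgm
  have hle : A ^ (-(2 * t1)) ≤ 1/A := by
    have h1 : A ^ (-(2 * t1)) ≤ A ^ (-1 : ℝ) := by
      apply Real.rpow_le_rpow_of_exponent_le hA1
      rw [ht1def]; linarith
    rwa [Real.rpow_neg_one, ← one_div] at h1
  have : s * A ^ (-(2 * t1)) + (1 - s) ≤ 1 - (k:ℝ)/A := by
    have h2 : s * A ^ (-(2 * t1)) ≤ s * (1/A) := by
      apply mul_le_mul_of_nonneg_left hle hs0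
    have h3 : s * (1/A) + (1 - s) = 1 - s * t1 := by rw [ht1def]; ring
    rw [← hst]
    calc s * A ^ (-(2 * t1)) + (1 - s) ≤ s * (1/A) + (1 - s) := by linarith
      _ = 1 - s * t1 := h3
  calc (A ^ (-(2 * t1))) ^ s ≤ s * A ^ (-(2 * t1)) + (1 - s) := hgm
    _ ≤ 1 - (k:ℝ)/A := this

theorem stmt_2 (a b r : ℕ) (ha : 0 < a) (hb : 0 < b) (f : Fin r → ℕ)
    (hlt : ∀ i, f i < a) (hsum : ∑ i, f i ≤ b) :
    (∏ i, (1 - (f i : ℝ) / (a : ℝ))) ≥ (a : ℝ) ^ (-(2 * (b : ℝ) / (a : ℝ)) - 1) := by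
  rcases eq_or_lt_of_le (Nat.succ_le_of_lt ha) with h1 | ha2
  · -- a = 1
    have ha1 : a = 1 := h1.symm
    subst ha1
    have hf : ∀ i, f i = 0 := fun i => Nat.lt_one_iff.mp (hlt i)
    simp [hf, Real.one_rpow]
  · -- a ≥ 2
    have ha2' : 2 ≤ a := ha2
    have hA0 : (0:ℝ) < a := by positivity
    have hA1 : (1:ℝ) ≤ a := by exact_mod_cast ha
    have hstep : ∀ i ∈ Finset.univ, (a:ℝ) ^ (-(2 * ((f i):ℝ) / a)) ≤ 1 - ((f i):ℝ)/a :=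
      fun i _ => key_ineq a (f i) ha2' (hlt i)
    have hprod : ∏ i, (a:ℝ) ^ (-(2 * ((f i):ℝ) / a)) ≤ ∏ i, (1 - ((f i):ℝ)/a) :=
      Finset.prod_le_prod (fun i _ => (Real.rpow_pos_of_pos hA0 _).le) hstep
    have heq : ∏ i, (a:ℝ) ^ (-(2 * ((f i):ℝ) / a))
        = (a:ℝ) ^ (∑ i, -(2 * ((f i):ℝ) / a)) := by
      simp only [Real.rpow_def_of_pos hA0]
      rw [← Real.exp_sum, Finset.mul_sum]
    have hsum' : (∑ i, (f i : ℝ)) ≤ (b : ℝ) := by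
      have := hsum
      push_cast [← Nat.cast_sum]
      exact_mod_cast this
    have hexp : (-(2 * (b : ℝ) / a) - 1) ≤ ∑ i, -(2 * ((f i):ℝ) / a) := by
      have hs : ∑ i, -(2 * ((f i):ℝ) / a) = -(2 * (∑ i, (f i:ℝ)) / a) := by
        rw [Finset.sum_neg_distrib]
        congr 1
        rw [Finset.mul_sum, Finset.sum_div]
      rw [hs]
      have h2a : 0 < 2 / (a:ℝ) := by positivity
      have : 2 * (∑ i, (f i:ℝ)) / a ≤ 2 * (b:ℝ) / a := by
        gcongr
      linarith
    have hmono : (a:ℝ) ^ (-(2 * (b : ℝ) / a) - 1) ≤ (a:ℝ) ^ (∑ i, -(2 * ((f i):ℝ) / a)) :=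
      Real.rpow_le_rpow_of_exponent_le hA1 hexp
    calc (a:ℝ) ^ (-(2 * (b : ℝ) / (a:ℝ)) - 1)
        ≤ (a:ℝ) ^ (∑ i, -(2 * ((f i):ℝ) / a)) := hmono
      _ = ∏ i, (a:ℝ) ^ (-(2 * ((f i):ℝ) / a)) := heq.symm
      _ ≤ ∏ i, (1 - ((f i):ℝ)/a) := hprod
end
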